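/- arXiv:2507.11080 — 5 statements merged into one kernel-verified Lean document; each statement's English description precedes it below -/
import Mathlib

section
/- Let H be a hypergraph and F a reduced elimination forest of H. Then for every vertex u of H, the subhypergraph of H induced by the set of descendants of u in F (including u) is connected. Moreover, for every non-leaf vertex u and every child v of u in F, the subhypergraph induced by the descendants of v together with u is connected. -/
/-- A hypergraph on vertex type `V`: a set of nonempty hyperedges. -/
structure SetHypergraph (V : Type*) where
  E : Set (Set V)
  edge_nonempty : ∀ e ∈ E, e.Nonempty

/-- Two vertices are adjacent if they are distinct and share a hyperedge. -/
def SetHypergraph.adj {V : Type*} (H : SetHypergraph V) (u v : V) : Prop :=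
  u ≠ v ∧ ∃ e ∈ H.E, u ∈ e ∧ v ∈ e

/-- A rooted forest on `V`, given by parent pointers, with no infinite ancestor chains. -/
structure RootedForest (V : Type*) where
  parent : V → Option V
  wf : WellFounded fun a b => parent b = some a

/-- `F.anc a b` : `a` is an ancestor of `b` (every vertex is an ancestor of itself). -/
def RootedForest.anc {V : Type*} (F : RootedForest V) (a b : V) : Prop :=
  Relation.ReflTransGen (fun x y => F.parent x = some y) b a

/-- The set of descendants of `x` (including `x` itself). -/
def RootedForest.desc {V : Type*} (F : RootedForest V) (x : V) : Set V :=
  {v | F.anc x v}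

/-- `F` is an elimination forest of `H`: any two adjacent vertices are in
ancestor–descendant relation. -/
def IsEliminationForest {V : Type*} (H : SetHypergraph V) (F : RootedForest V) : Prop :=
  ∀ u v, H.adj u v → F.anc u v ∨ F.anc v u

/-- `F` is reduced: every non-leaf vertex `u` is adjacent in `H` to the subtree
rooted at each of its children. -/
def IsReducedForest {V : Type*} (H : SetHypergraph V) (F : RootedForest V) : Prop :=
  ∀ u v, F.parent v = some u → ∃ w ∈ F.desc v, H.adj u w

/-- The subhypergraph of `H` induced by `S` is connected. -/
def HConnectedOn {V : Type*} (H : SetHypergraph V) (S : Set V) : Prop :=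
  ∀ a ∈ S, ∀ b ∈ S,
    Relation.ReflTransGen (fun x y => x ∈ S ∧ y ∈ S ∧ H.adj x y) a b


lemma SetHypergraph.adj_symm' {V : Type*} (H : SetHypergraph V) {u v : V} (h : H.adj u v) :
    H.adj v u := by
  obtain ⟨hne, e, he, hu, hv⟩ := h
  exact ⟨hne.symm, e, he, hv, hu⟩

lemma hconn_mono {V : Type*} (H : SetHypergraph V) {S T : Set V} (hST : S ⊆ T) {a b : V}
    (h : Relation.ReflTransGen (fun x y => x ∈ S ∧ y ∈ S ∧ H.adj x y) a b) :
    Relation.ReflTransGen (fun x y => x ∈ T ∧ y ∈ T ∧ H.adj x y) a b :=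
  Relation.ReflTransGen.mono (p := fun x y => x ∈ T ∧ y ∈ T ∧ H.adj x y) (fun _ _ ⟨h1, h2, h3⟩ => ⟨hST h1, hST h2, h3⟩) _ _ h

lemma hconn_symm {V : Type*} (H : SetHypergraph V) (S : Set V) {a b : V}
    (h : Relation.ReflTransGen (fun x y => x ∈ S ∧ y ∈ S ∧ H.adj x y) a b) :
    Relation.ReflTransGen (fun x y => x ∈ S ∧ y ∈ S ∧ H.adj x y) b a := by
  induction h with
  | refl => exact Relation.ReflTransGen.refl
  | tail _ hstep ih =>
      exact Relation.ReflTransGen.head ⟨hstep.2.1, hstep.1, H.adj_symm' hstep.2.2⟩ ih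

lemma mem_desc_self {V : Type*} (F : RootedForest V) (u : V) : u ∈ F.desc u :=
  Relation.ReflTransGen.refl

lemma desc_subset {V : Type*} (F : RootedForest V) {u v : V} (h : F.parent v = some u) :
    F.desc v ⊆ F.desc u := fun _ hw => hw.tail h

lemma not_mem_desc {V : Type*} (F : RootedForest V) {u v : V} (h : F.parent v = some u) :
    u ∉ F.desc v := by
  intro hmem
  have tg : Relation.TransGen (fun x y => F.parent x = some y) v v :=
    Relation.TransGen.head' h hmem
  have tg' : Relation.TransGen (fun a b => F.parent b = some a) v v := by
    rw [← Relation.transGen_swap] at tg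
    exact tg
  exact F.wf.transGen.asymmetric _ _ tg' tg'

lemma conn_insert {V : Type*} (H : SetHypergraph V) (F : RootedForest V)
    (hred : IsReducedForest H F) {u v : V} (hpar : F.parent v = some u)
    (hconn : HConnectedOn H (F.desc v)) : HConnectedOn H (insert u (F.desc v)) := by
  obtain ⟨w, hw, hadj⟩ := hred u v hpar
  have key : ∀ a ∈ insert u (F.desc v),
      Relation.ReflTransGen
        (fun x y => x ∈ insert u (F.desc v) ∧ y ∈ insert u (F.desc v) ∧ H.adj x y) u a := by
    intro a ha
    rcases ha with rfl | ha
    · exact Relation.ReflTransGen.refl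
    · have h1 : Relation.ReflTransGen
          (fun x y => x ∈ insert u (F.desc v) ∧ y ∈ insert u (F.desc v) ∧ H.adj x y) u w :=
        Relation.ReflTransGen.single ⟨Set.mem_insert _ _, Set.mem_insert_of_mem _ hw, hadj⟩
      exact h1.trans (hconn_mono H (Set.subset_insert _ _) (hconn w hw a ha))
  intro a ha b hb
  exact (hconn_symm H _ (key a ha)).trans (key b hb)

/-- In a reduced elimination forest, every subtree induces a connected subhypergraph,
and for every non-leaf `u` with child `v`, the descendants of `v` together with `u`
induce a connected subhypergraph. -/
theorem stmt_2 {V : Type*} [Fintype V] (H : SetHypergraph V) (F : RootedForest V)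
    (hEF : IsEliminationForest H F) (hred : IsReducedForest H F) :
    (∀ u : V, HConnectedOn H (F.desc u)) ∧
    (∀ u v : V, F.parent v = some u → HConnectedOn H (insert u (F.desc v))) := by
  have main : ∀ n : ℕ, ∀ u : V, (F.desc u).ncard ≤ n → HConnectedOn H (F.desc u) := by
    intro n
    induction n with
    | zero =>
        intro u hcard
        have : u ∈ F.desc u := mem_desc_self F u
        have hne : (F.desc u).Nonempty := ⟨u, this⟩
        have := Set.ncard_pos (Set.toFinite _) |>.mpr hne
        omega
    | succ n ih =>
        intro u hcard
        have key : ∀ a ∈ F.desc u,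
            Relation.ReflTransGen
              (fun x y => x ∈ F.desc u ∧ y ∈ F.desc u ∧ H.adj x y) u a := by
          intro a ha
          rcases (show Relation.ReflTransGen (fun x y => F.parent x = some y) a u from ha).cases_tail with
            heq | ⟨c, hac, hcu⟩
          · subst heq; exact Relation.ReflTransGen.refl
          · have hsub : F.desc c ⊆ F.desc u := desc_subset F hcu
            have hlt : (F.desc c).ncard < (F.desc u).ncard := by
              apply Set.ncard_lt_ncard _ (Set.toFinite _)
              exact ⟨hsub, fun h => not_mem_desc F hcu (h (mem_desc_self F u))⟩
            have hc : HConnectedOn H (F.desc c) := ih c (by omega)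
            have hins : HConnectedOn H (insert u (F.desc c)) := conn_insert H F hred hcu hc
            have hins_sub : insert u (F.desc c) ⊆ F.desc u :=
              Set.insert_subset (mem_desc_self F u) hsub
            exact hconn_mono H hins_sub
              (hins u (Set.mem_insert _ _) a (Set.mem_insert_of_mem _ hac))
        intro a ha b hb
        exact (hconn_symm H _ (key a ha)).trans (key b hb)
  have first : ∀ u : V, HConnectedOn H (F.desc u) := fun u => main _ u le_rfl
  exact ⟨first, fun u v hpar => conn_insert H F hred hpar (first v)⟩
end

section
/- Let X_1, ..., X_q be a sequence of finite sets, each of size at most p. Call index i a peak if i = q, or i < q and X_i \ X_{i+1} ≠ ∅. Suppose all sets indexed by peaks are pairwise distinct and there are at most m distinct peak sets possible. Partition [q] into maximal intervals on which the sequence is ⊆-increasing (i.e., X_{b_1} ⊆ X_{b_2} whenever b_1 < b_2 are in the same interval); each such interval ends at a peak. Then q ≤ p·m. -/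
/-- Peaks bound the number of `X`-intervals. `X 1, …, X q` is a sequence of nonempty
finite sets of size at most `p`, with consecutive sets distinct. An index `i` is a peak
if `i = q` or `X i \ X (i+1) ≠ ∅`. If the sets indexed by peaks are pairwise distinct
and all of them lie in a family `S` of at most `m` possible sets, then `q ≤ p·m`. -/
theorem stmt_7 {α : Type*} [DecidableEq α] (q p m : ℕ) (X : ℕ → Finset α)
    (hne : ∀ i, 1 ≤ i → i ≤ q → (X i).Nonempty)
    (hcard : ∀ i, 1 ≤ i → i ≤ q → (X i).card ≤ p)
    (hconsec : ∀ i, 1 ≤ i → i + 1 ≤ q → X i ≠ X (i + 1))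
    (hpeak : ∀ i j, 1 ≤ i → i ≤ q → 1 ≤ j → j ≤ q →
      (i = q ∨ (X i \ X (i + 1)).Nonempty) →
      (j = q ∨ (X j \ X (j + 1)).Nonempty) → i ≠ j → X i ≠ X j)
    (S : Finset (Finset α)) (hSm : S.card ≤ m)
    (hSmem : ∀ i, 1 ≤ i → i ≤ q → (i = q ∨ (X i \ X (i + 1)).Nonempty) → X i ∈ S) :
    q ≤ p * m := by
  classical
  rcases Nat.eq_zero_or_pos q with hq0 | hq0
  · simp [hq0]
  have hp1 : 1 ≤ p := le_trans (hne 1 le_rfl hq0).card_pos (hcard 1 le_rfl hq0)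
  have hexists : ∀ i : ℕ,
      ∃ k, (i ≤ k ∧ k ≤ q ∧ (k = q ∨ (X k \ X (k + 1)).Nonempty)) ∨ k = q :=
    fun i => ⟨q, Or.inr rfl⟩
  set π : ℕ → ℕ := fun i => Nat.find (hexists i) with hπ
  have hπspec : ∀ i, i ≤ q →
      i ≤ π i ∧ π i ≤ q ∧ (π i = q ∨ (X (π i) \ X (π i + 1)).Nonempty) := by
    intro i hi
    have h := Nat.find_spec (hexists i)
    rcases h with h | h
    · exact h
    · have hq : π i = q := h
      rw [hq]; exact ⟨hi, le_rfl, Or.inl rfl⟩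
  have hπle : ∀ i, π i ≤ q := fun i => Nat.find_le (Or.inr rfl)
  have hmin : ∀ i k, i ≤ k → k < π i → X k ⊆ X (k + 1) := by
    intro i k hik hk
    have h := Nat.find_min (hexists i) hk
    push_neg at h
    obtain ⟨h1, h2⟩ := h
    have hkq : k ≤ q := le_trans (le_of_lt hk) (hπle i)
    have h3 := (h1 hik hkq).2
    rw [Finset.sdiff_eq_empty_iff_subset] at h3
    exact h3
  have chain : ∀ i, 1 ≤ i → i ≤ q → ∀ d, i + d ≤ π i →
      (X i).card + d ≤ (X (i + d)).card := by
    intro i h1 hiq d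
    induction d with
    | zero => intro _; simp
    | succ d ih =>
      intro hd
      have hd' : i + d ≤ π i := by omega
      have hlt : i + d < π i := by omega
      have hsub : X (i + d) ⊆ X (i + d + 1) := hmin i (i + d) (by omega) hlt
      have hq' : π i ≤ q := (hπspec i hiq).2.1
      have hne' : X (i + d) ≠ X (i + d + 1) := hconsec (i + d) (by omega) (by omega)
      have hlt' : (X (i + d)).card < (X (i + d + 1)).card :=
        Finset.card_lt_card (hsub.ssubset_of_ne hne')
      have := ih hd'
      show (X i).card + (d + 1) ≤ (X (i + d + 1)).card
      omega
  have hdist : ∀ i, 1 ≤ i → i ≤ q → π i - i < p := by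
    intro i h1 hi
    obtain ⟨ha, hb, _⟩ := hπspec i hi
    have h := chain i h1 hi (π i - i) (by omega)
    have h2 : 1 ≤ (X i).card := (hne i h1 hi).card_pos
    have h3 : (X (i + (π i - i))).card ≤ p := by
      have : i + (π i - i) = π i := by omega
      rw [this]
      exact hcard (π i) (by omega) hb
    omega
  have key : (Finset.Icc 1 q).card ≤ (S ×ˢ Finset.range p).card := by
    apply Finset.card_le_card_of_injOn (fun i => (X (π i), π i - i))
    · intro i hi
      simp only [Finset.coe_Icc, Set.mem_Icc] at hi
      obtain ⟨h1, h2, h3⟩ := hπspec i hi.2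
      exact Finset.mem_product.2
        ⟨hSmem (π i) (le_trans hi.1 h1) h2 h3, Finset.mem_range.2 (hdist i hi.1 hi.2)⟩
    · intro i hi j hj hij
      simp only [Finset.coe_Icc, Set.mem_Icc] at hi hj
      obtain ⟨hi1, hi2, hi3⟩ := hπspec i hi.2
      obtain ⟨hj1, hj2, hj3⟩ := hπspec j hj.2
      have h1 : X (π i) = X (π j) := congrArg Prod.fst hij
      have h2 : π i - i = π j - j := congrArg Prod.snd hij
      have hππ : π i = π j := by
        by_contra hne'
        exact hpeak (π i) (π j) (le_trans hi.1 hi1) hi2 (le_trans hj.1 hj1) hj2 hi3 hj3 hne' h1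
      omega
  rw [Nat.card_Icc, Finset.card_product, Finset.card_range] at key
  have : q ≤ S.card * p := by omega
  calc q ≤ S.card * p := this
    _ ≤ m * p := Nat.mul_le_mul_right _ hSm
    _ = p * m := Nat.mul_comm _ _
end

section
/- Every intersection graph of (vertex sets of) subtrees of a forest is chordal. -/
open SimpleGraph

/-- In a graph, between two vertices of a connected induced subgraph there is a
walk whose support lies in the set. -/
lemma walk_in_set' {V : Type*} (F : SimpleGraph V) {s : Set V}
    (hs : (F.induce s).Connected) {a b : V} (ha : a ∈ s) (hb : b ∈ s) :
    ∃ p : F.Walk a b, ∀ v ∈ p.support, v ∈ s := by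
  obtain ⟨q⟩ := hs.preconnected ⟨a, ha⟩ ⟨b, hb⟩
  refine ⟨q.map (SimpleGraph.Embedding.induce s).toHom, ?_⟩
  intro v hv
  replace hv : v ∈ q.support.map (SimpleGraph.Embedding.induce (G := F) s).toHom := by
    rw [← SimpleGraph.Walk.support_map]; exact hv
  obtain ⟨⟨x, hx⟩, -, rfl⟩ := List.mem_map.mp hv
  exact hx

/-- A walk from inside `A` to outside `A` crosses an edge leaving `A`. -/
lemma walk_cross' {V : Type*} {F : SimpleGraph V} {A : Set V} :
    ∀ {x y : V} (p : F.Walk x y), x ∈ A → y ∉ A →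
    ∃ u w, F.Adj u w ∧ u ∈ A ∧ w ∉ A ∧ u ∈ p.support ∧ w ∈ p.support := by
  intro x y p
  induction p with
  | nil => intro hx hy; exact absurd hx hy
  | @cons x m y h q ih =>
    intro hx hy
    by_cases hm : m ∈ A
    · obtain ⟨u, w, h1, h2, h3, h4, h5⟩ := ih hm hy
      exact ⟨u, w, h1, h2, h3, by simp [Walk.support_cons, h4],
        by simp [Walk.support_cons, h5]⟩
    · exact ⟨x, m, h, hx, hm, by simp [Walk.support_cons],
        by simp [Walk.support_cons, Walk.start_mem_support]⟩

lemma cycle_adj_iff' {n : ℕ} (hn : 4 ≤ n) {i j : ℕ} (hi : i < n) (hj : j < n) :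
    (SimpleGraph.cycleGraph n).Adj ⟨i, hi⟩ ⟨j, hj⟩ ↔
      (i + 1 = j ∨ j + 1 = i ∨ (i = 0 ∧ j = n - 1) ∨ (j = 0 ∧ i = n - 1)) := by
  have key : ∀ a b : ℕ, a < n → b < n →
      ((a + (n - b)) % n = 1 ↔ (b + 1 = a ∨ (a = 0 ∧ b = n - 1))) := by
    intro a b ha hb
    rcases le_or_gt b a with h | h
    · have h2 : a + (n - b) = (a - b) + n := by omega
      rw [h2, Nat.add_mod_right, Nat.mod_eq_of_lt (by omega)]
      omega
    · rw [Nat.mod_eq_of_lt (by omega)]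
      omega
  rw [SimpleGraph.cycleGraph_adj']
  have hs1 : ((⟨i, hi⟩ - ⟨j, hj⟩ : Fin n)).val = (i + (n - j)) % n := by
    rw [Fin.sub_def]
    simp only [Fin.val_mk]
    congr 1
    omega
  have hs2 : ((⟨j, hj⟩ - ⟨i, hi⟩ : Fin n)).val = (j + (n - i)) % n := by
    rw [Fin.sub_def]
    simp only [Fin.val_mk]
    congr 1
    omega
  rw [hs1, hs2, key i j hi hj, key j i hj hi]
  tauto

/-- The intersection graph of subtrees (connected induced subgraphs) of a forest is
chordal, i.e. it contains no induced cycle of length at least 4. -/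
theorem stmt_8 {V ι : Type*} (F : SimpleGraph V) (hF : F.IsAcyclic)
    (S : ι → Set V) (hconn : ∀ i, (F.induce (S i)).Connected) :
    ∀ n, 4 ≤ n →
      IsEmpty ((SimpleGraph.cycleGraph n) ↪g
        (SimpleGraph.fromRel fun i j : ι => (S i ∩ S j).Nonempty)) := by
  intro n hn
  classical
  constructor
  intro e
  have hn0 : 0 < n := by omega
  have hupath := SimpleGraph.isAcyclic_iff_path_unique.mp hF
  -- indexing
  set I : ℕ → Fin n := fun j => ⟨j % n, Nat.mod_lt _ hn0⟩ with hI
  have hIval : ∀ (j : ℕ) (hj : j < n), (I j : Fin n) = ⟨j, hj⟩ := by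
    intro j hj
    simp [hI, Fin.ext_iff, Nat.mod_eq_of_lt hj]
  set T : ℕ → Set V := fun j => S (e (I j)) with hT
  -- adjacency facts
  have hadj : ∀ i j : ℕ, i < n → j < n →
      ((SimpleGraph.cycleGraph n).Adj (I i) (I j) ↔
        (i + 1 = j ∨ j + 1 = i ∨ (i = 0 ∧ j = n - 1) ∨ (j = 0 ∧ i = n - 1))) := by
    intro i j hi hj
    rw [hIval i hi, hIval j hj]
    exact cycle_adj_iff' hn hi hj
  have hne : ∀ i j : Fin n, (SimpleGraph.cycleGraph n).Adj i j →
      (S (e i) ∩ S (e j)).Nonempty := by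
    intro i j h
    have h2 := (e.map_adj_iff).mpr h
    rw [SimpleGraph.fromRel_adj] at h2
    rcases h2.2 with h1 | h1
    · exact h1
    · rwa [Set.inter_comm]
  have hdisj : ∀ i j : Fin n, i ≠ j → ¬(SimpleGraph.cycleGraph n).Adj i j →
      S (e i) ∩ S (e j) = ∅ := by
    intro i j hij h
    by_contra hcon
    apply h
    rw [← e.map_adj_iff, SimpleGraph.fromRel_adj]
    exact ⟨fun hq => hij (e.injective hq), Or.inl (Set.nonempty_iff_ne_empty.mpr hcon)⟩
  -- concrete facts
  have hA : ∀ j : ℕ, j + 1 < n → (T j ∩ T (j + 1)).Nonempty := by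
    intro j hj
    exact hne _ _ ((hadj j (j + 1) (by omega) hj).mpr (by omega))
  have hA0 : (T (n - 1) ∩ T 0).Nonempty := by
    exact hne _ _ ((hadj (n - 1) 0 (by omega) (by omega)).mpr (by omega))
  have hD1 : ∀ m : ℕ, 3 ≤ m → m ≤ n - 1 → T 1 ∩ T m = ∅ := by
    intro m h3 hm
    refine hdisj _ _ ?_ ?_
    · rw [hIval 1 (by omega), hIval m (by omega)]
      simp only [ne_eq, Fin.mk.injEq]
      omega
    · rw [hadj 1 m (by omega) (by omega)]
      omega
  have hD2 : T 0 ∩ T 2 = ∅ := by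
    refine hdisj _ _ ?_ ?_
    · rw [hIval 0 (by omega), hIval 2 (by omega)]
      simp only [ne_eq, Fin.mk.injEq]
      omega
    · rw [hadj 0 2 (by omega) (by omega)]
      omega
  -- the chain walk
  have chain : ∀ (b0 : V), b0 ∈ T 2 → ∀ k, 2 ≤ k → k < n →
      ∃ x, x ∈ T k ∧ ∃ p : F.Walk b0 x,
        ∀ v ∈ p.support, ∃ m, 2 ≤ m ∧ m ≤ k ∧ v ∈ T m := by
    intro b0 hb0 k
    induction k with
    | zero => omega
    | succ k ih =>
      intro h2 hk
      rcases Nat.lt_or_ge k 2 with h | h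
      · have hk1 : k = 1 := by omega
        subst hk1
        refine ⟨b0, hb0, Walk.nil, ?_⟩
        intro v hv
        simp only [Walk.support_nil, List.mem_singleton] at hv
        subst hv
        exact ⟨2, le_refl _, le_refl _, hb0⟩
      · obtain ⟨x, hx, p, hp⟩ := ih h (by omega)
        obtain ⟨y, hy1, hy2⟩ := hA k (by omega)
        obtain ⟨q, hq⟩ := walk_in_set' F (hconn (e (I k))) hx hy1
        refine ⟨y, hy2, p.append q, ?_⟩
        intro v hv
        rcases (Walk.mem_support_append_iff _ _).mp hv with h' | h'
        · obtain ⟨m, hm1, hm2, hm3⟩ := hp v h'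
          exact ⟨m, hm1, by omega, hm3⟩
        · exact ⟨k, h, by omega, hq v h'⟩
  obtain ⟨a, ha0, ha1⟩ := hA 0 (by omega)
  obtain ⟨b, hb1, hb2⟩ := hA 1 (by omega)
  obtain ⟨y0, hy0a, hy0b⟩ := hA0
  -- path from a to b inside T 1
  obtain ⟨q1, hq1⟩ := walk_in_set' F (hconn (e (I 1))) ha1 hb1
  -- walk from b around the cycle back to a
  obtain ⟨c, hc, p2, hp2⟩ := chain b hb2 (n - 1) (by omega) (by omega)
  obtain ⟨q3, hq3⟩ := walk_in_set' F (hconn (e (I (n - 1)))) hc hy0a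
  obtain ⟨q4, hq4⟩ := walk_in_set' F (hconn (e (I 0))) hy0b ha0
  set W2 : F.Walk b a := p2.append (q3.append q4) with hW2
  have hW2supp : ∀ v ∈ W2.support, v ∈ T 0 ∨ ∃ m, 2 ≤ m ∧ m ≤ n - 1 ∧ v ∈ T m := by
    intro v hv
    rcases (Walk.mem_support_append_iff _ _).mp hv with h' | h'
    · exact Or.inr (hp2 v h')
    · rcases (Walk.mem_support_append_iff _ _).mp h' with h'' | h''
      · exact Or.inr ⟨n - 1, by omega, le_refl _, hq3 v h''⟩
      · exact Or.inl (hq4 v h'')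
  -- the unique path from a to b
  set P : F.Path a b := q1.toPath with hP
  have hPT1 : ∀ v ∈ P.1.support, v ∈ T 1 :=
    fun v hv => hq1 v (Walk.support_bypass_subset _ hv)
  have hPeq : P = W2.reverse.toPath := hupath _ _
  have hPU : ∀ v ∈ P.1.support, v ∈ T 0 ∨ v ∈ T 2 := by
    intro v hv
    have hv2 : v ∈ W2.support := by
      have := Walk.support_bypass_subset _ (hPeq ▸ hv)
      rwa [Walk.support_reverse, List.mem_reverse] at this
    rcases hW2supp v hv2 with h' | ⟨m, hm1, hm2, hm3⟩
    · exact Or.inl h'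
    · rcases Nat.lt_or_ge m 3 with h3 | h3
      · have : m = 2 := by omega
        subst this
        exact Or.inr hm3
      · exfalso
        have : v ∈ T 1 ∩ T m := ⟨hPT1 v hv, hm3⟩
        rw [hD1 m h3 hm2] at this
        exact this
  -- find the crossing edge
  have hbT0 : b ∉ T 0 := fun h => by
    have : b ∈ T 0 ∩ T 2 := ⟨h, hb2⟩
    rw [hD2] at this
    exact this
  obtain ⟨u, w, huw, huA, hwA, husup, hwsup⟩ := walk_cross' (A := T 0) P.1 ha0 hbT0
  have huT1 : u ∈ T 1 := hPT1 u husup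
  have hwT1 : w ∈ T 1 := hPT1 w hwsup
  have hwT2 : w ∈ T 2 := (hPU w hwsup).resolve_left hwA
  have huT2 : u ∉ T 2 := fun h => by
    have : u ∈ T 0 ∩ T 2 := ⟨huA, h⟩
    rw [hD2] at this
    exact this
  have huTm : ∀ m, 2 ≤ m → m ≤ n - 1 → u ∉ T m := by
    intro m hm1 hm2 h
    rcases Nat.lt_or_ge m 3 with h3 | h3
    · have : m = 2 := by omega
      subst this
      exact huT2 h
    · have : u ∈ T 1 ∩ T m := ⟨huT1, h⟩
      rw [hD1 m h3 hm2] at this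
      exact this
  -- second chain, from w
  obtain ⟨c2, hc2, R0, hR0⟩ := chain w hwT2 (n - 1) (by omega) (by omega)
  obtain ⟨R1, hR1⟩ := walk_in_set' F (hconn (e (I (n - 1)))) hc2 hy0a
  set W3 : F.Walk w y0 := R0.append R1 with hW3
  have huW3 : u ∉ W3.support := by
    intro h
    rcases (Walk.mem_support_append_iff _ _).mp h with h' | h'
    · obtain ⟨m, hm1, hm2, hm3⟩ := hR0 u h'
      exact huTm m hm1 hm2 hm3
    · exact huTm (n - 1) (by omega) (le_refl _) (hR1 u h')
  -- path from u to y0 inside T 0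
  obtain ⟨q5, hq5⟩ := walk_in_set' F (hconn (e (I 0))) huA hy0b
  set Qp : F.Path u y0 := q5.toPath with hQp
  have hQpT0 : ∀ v ∈ Qp.1.support, v ∈ T 0 :=
    fun v hv => hq5 v (Walk.support_bypass_subset _ hv)
  -- the alternative path through w
  set R : F.Path w y0 := W3.toPath with hR
  have huR : u ∉ R.1.support := fun h => huW3 (Walk.support_bypass_subset _ h)
  have hP2 : (Walk.cons huw R.1).IsPath := R.2.cons huR
  have := hupath Qp ⟨Walk.cons huw R.1, hP2⟩
  have hwQp : w ∈ Qp.1.support := by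
    rw [this]
    simp [Walk.support_cons, Walk.start_mem_support]
  have : w ∈ T 0 ∩ T 2 := ⟨hQpT0 w hwQp, hwT2⟩
  rw [hD2] at this
  exact this
end

section
/- Let G be a chordal graph whose maximum clique has size at most d. Then the chromatic number of G is at most d. -/
namespace ChordalAux
open SimpleGraph

variable {V : Type*} {G : SimpleGraph V}

/-- function-walk from `x` to `y` of length `L`. -/
def FW (G : SimpleGraph V) (p : ℕ → V) (L : ℕ) (x y : V) : Prop :=
  p 0 = x ∧ p L = y ∧ ∀ i < L, G.Adj (p i) (p (i + 1))

def Chordal (G : SimpleGraph V) : Prop := ∀ n, 4 ≤ n → IsEmpty (cycleGraph n ↪g G)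

def Simp (G : SimpleGraph V) (v : V) : Prop :=
  ∀ a b, G.Adj v a → G.Adj v b → a ≠ b → G.Adj a b

lemma FW.rev {p : ℕ → V} {L : ℕ} {x y : V} (h : FW G p L x y) :
    FW G (fun i => p (L - i)) L y x := by
  obtain ⟨h0, hL, he⟩ := h
  refine ⟨by simpa using hL, by simpa using h0, fun i hi => ?_⟩
  have h1 : L - i = (L - (i+1)) + 1 := by omega
  show G.Adj (p (L - i)) (p (L - (i + 1)))
  rw [h1]
  exact (he _ (by omega)).symm

lemma FW.append {p q : ℕ → V} {L M : ℕ} {x y z : V}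
    (h : FW G p L x y) (h' : FW G q M y z) :
    FW G (fun i => if i < L then p i else q (i - L)) (L + M) x z := by
  obtain ⟨h0, hL, he⟩ := h
  obtain ⟨h0', hM, he'⟩ := h'
  refine ⟨?_, ?_, fun i hi => ?_⟩
  · rcases Nat.eq_zero_or_pos L with h | h
    · simp [h, h0', ← h0, h ▸ hL]
    · simp [h, h0]
  · simp [hM]
  · by_cases h1 : i < L
    · by_cases h2 : i + 1 < L
      · simpa [h1, h2] using he i h1
      · have h3 : i + 1 = L := by omega
        have := he i h1
        rw [h3] at this ⊢
        simpa [h1, h0', hL] using this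
    · have h2 : ¬ (i + 1 < L) := by omega
      simp only [h1, h2, if_false]
      have h3 : i + 1 - L = (i - L) + 1 := by omega
      rw [h3]
      exact he' _ (by omega)

/-- generic shortcut: cut out a section of length `s` starting after `i`. -/
lemma shortcut {p : ℕ → V} {L : ℕ} {x y : V} {A : Set V}
    (h : FW G p L x y) (hint : ∀ m, 0 < m → m < L → p m ∈ A)
    (i s : ℕ) (hs : 1 ≤ s) (hle : i + s ≤ L)
    (hjun : i + s < L → G.Adj (p i) (p (i + s + 1)))
    (hend : i + s = L → p i = p L) :
    ∃ q, FW G q (L - s) x y ∧ ∀ m, 0 < m → m < L - s → q m ∈ A := by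
  obtain ⟨h0, hL, he⟩ := h
  refine ⟨fun m => if m ≤ i then p m else p (m + s), ⟨by simp [h0], ?_, fun m hm => ?_⟩,
    fun m hm1 hm2 => ?_⟩
  · show (if L - s ≤ i then p (L - s) else p (L - s + s)) = y
    by_cases hc : L - s ≤ i
    · rw [if_pos hc, (by omega : L - s = i), hend (by omega), hL]
    · rw [if_neg hc, (by omega : L - s + s = L), hL]
  · show G.Adj (if m ≤ i then p m else p (m + s)) (if m + 1 ≤ i then p (m + 1) else p (m + 1 + s))
    rcases lt_trichotomy m i with hc | hc | hc
    · rw [if_pos (by omega), if_pos (by omega)]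
      exact he m (by omega)
    · subst hc
      rw [if_pos le_rfl, if_neg (by omega), (by omega : m + 1 + s = m + s + 1)]
      exact hjun (by omega)
    · rw [if_neg (by omega), if_neg (by omega), (by omega : m + 1 + s = (m + s) + 1)]
      exact he _ (by omega)
  · show (if m ≤ i then p m else p (m + s)) ∈ A
    by_cases hc : m ≤ i
    · rw [if_pos hc]
      exact hint m hm1 (by omega)
    · rw [if_neg hc]
      exact hint _ (by omega) (by omega)


/-- existence of a minimal (hence induced) walk with interior in `A`. -/
lemma exists_min_walk {x y : V} {A : Set V}
    (hne : x ≠ y) (hna : ¬ G.Adj x y)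
    (hex : ∃ L p, FW G p L x y ∧ ∀ i, 0 < i → i < L → p i ∈ A) :
    ∃ L p, FW G p L x y ∧ (∀ i, 0 < i → i < L → p i ∈ A) ∧ 2 ≤ L ∧
      (∀ i j, i < j → j ≤ L → p i ≠ p j) ∧
      (∀ i j, i < j → j ≤ L → G.Adj (p i) (p j) → j = i + 1) := by
  classical
  have hPex : ∃ L, ∃ p, FW G p L x y ∧ ∀ i, 0 < i → i < L → p i ∈ A := hex
  set L := Nat.find hPex with hLdef
  obtain ⟨p, hfw, hA⟩ := Nat.find_spec hPex
  have hmin : ∀ M, M < L → ¬ ∃ p, FW G p M x y ∧ ∀ i, 0 < i → i < M → p i ∈ A :=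
    fun M hM => Nat.find_min hPex hM
  have hL2 : 2 ≤ L := by
    rcases hfw with ⟨h0, hLy, he⟩
    rcases Nat.lt_or_ge L 2 with h | h
    · exfalso
      rcases (by omega : Nat.find hPex = 0 ∨ Nat.find hPex = 1) with h1 | h1
      · exact hne (by rw [← h0, ← hLy, h1])
      · refine hna ?_
        rw [← h0, ← hLy, h1]
        exact he 0 (by omega)
    · exact h
  refine ⟨L, p, hfw, hA, hL2, ?_, ?_⟩
  · intro i j hij hjL heq
    have hs : 1 ≤ j - i := by omega
    obtain ⟨q, hq, hqA⟩ := shortcut hfw hA i (j - i) hs (by omega)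
      (fun hlt => by
        rw [(by omega : i + (j - i) + 1 = j + 1), heq]
        exact hfw.2.2 j (by omega))
      (fun hEq => by rw [heq, (by omega : j = L)])
    exact hmin (L - (j - i)) (by omega) ⟨q, hq, hqA⟩
  · intro i j hij hjL hadj
    by_contra hcon
    have hs : 1 ≤ j - i - 1 := by omega
    obtain ⟨q, hq, hqA⟩ := shortcut hfw hA i (j - i - 1) hs (by omega)
      (fun hlt => by rw [(by omega : i + (j - i - 1) + 1 = j)]; exact hadj)
      (fun hEq => by omega)
    exact hmin (L - (j - i - 1)) (by omega) ⟨q, hq, hqA⟩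

set_option linter.unusedSectionVars false

section Separator
variable [Fintype V]

/-- `S` separates `a` from `b`. -/
def Sep (G : SimpleGraph V) (a b : V) (S : Finset V) : Prop :=
  a ∉ S ∧ b ∉ S ∧ ∀ L p, FW G p L a b → ∃ i ≤ L, p i ∈ S

/-- `v` is reachable from `x` by a walk avoiding `S`. -/
def Avoid (G : SimpleGraph V) (S : Finset V) (x v : V) : Prop :=
  ∃ L p, FW G p L x v ∧ ∀ i ≤ L, p i ∉ S

lemma Avoid.notin {S : Finset V} {x v : V} (h : Avoid G S x v) : v ∉ S := by
  obtain ⟨L, p, ⟨_, hL, _⟩, hS⟩ := h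
  exact hL ▸ hS L le_rfl

lemma Avoid.refl {S : Finset V} {x : V} (hx : x ∉ S) : Avoid G S x x :=
  ⟨0, fun _ => x, ⟨rfl, rfl, fun i hi => by omega⟩, fun i _ => hx⟩

lemma Avoid.step {S : Finset V} {x v w : V} (h : Avoid G S x v) (hvw : G.Adj v w)
    (hw : w ∉ S) : Avoid G S x w := by
  obtain ⟨L, p, hfw, hS⟩ := h
  refine ⟨L + 1, fun i => if i ≤ L then p i else w, ⟨?_, ?_, fun i hi => ?_⟩, fun i hi => ?_⟩
  · simp [hfw.1]
  · show (if L + 1 ≤ L then p (L + 1) else w) = w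
    rw [if_neg (by omega)]
  · show G.Adj (if i ≤ L then p i else w) (if i + 1 ≤ L then p (i + 1) else w)
    by_cases hc : i < L
    · rw [if_pos (by omega), if_pos (by omega)]
      exact hfw.2.2 i hc
    · rw [if_pos (by omega : i ≤ L), if_neg (by omega), (by omega : i = L), hfw.2.1]
      exact hvw
  · show (if i ≤ L then p i else w) ∉ S
    by_cases hc : i ≤ L
    · rw [if_pos hc]; exact hS i hc
    · rw [if_neg hc]; exact hw

lemma Avoid.symm {S : Finset V} {x v : V} (h : Avoid G S x v) : Avoid G S v x := by
  obtain ⟨L, p, hfw, hS⟩ := h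
  exact ⟨L, fun i => p (L - i), hfw.rev, fun i _ => hS _ (by omega)⟩

lemma Avoid.trans {S : Finset V} {x v w : V} (h : Avoid G S x v) (h' : Avoid G S v w) :
    Avoid G S x w := by
  obtain ⟨L, p, hfw, hS⟩ := h
  obtain ⟨M, q, hfw', hS'⟩ := h'
  refine ⟨L + M, _, hfw.append hfw', fun i hi => ?_⟩
  show (if i < L then p i else q (i - L)) ∉ S
  by_cases hc : i < L
  · rw [if_pos hc]; exact hS i (by omega)
  · rw [if_neg hc]; exact hS' _ (by omega)

lemma Avoid.mem_of_walk {S : Finset V} {x v : V} {L : ℕ} {p : ℕ → V}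
    (hfw : FW G p L x v) (hS : ∀ i ≤ L, p i ∉ S) {i : ℕ} (hi : i ≤ L) :
    Avoid G S x (p i) :=
  ⟨i, p, ⟨hfw.1, rfl, fun j hj => hfw.2.2 j (by omega)⟩, fun j hj => hS j (by omega)⟩

lemma not_sep_of_avoid {S : Finset V} {a b : V} (h : Avoid G S a b) : ¬ Sep G a b S := by
  obtain ⟨L, p, hfw, hS⟩ := h
  rintro ⟨_, _, hsep⟩
  obtain ⟨i, hi, hiS⟩ := hsep L p hfw
  exact hS i hi hiS

lemma Sep.symm {S : Finset V} {a b : V} (h : Sep G a b S) : Sep G b a S := by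
  obtain ⟨ha, hb, hsep⟩ := h
  refine ⟨hb, ha, fun L p hfw => ?_⟩
  obtain ⟨i, hi, hiS⟩ := hsep L _ hfw.rev
  exact ⟨L - i, by omega, hiS⟩

lemma exists_sep {a b : V} (hab : a ≠ b) (hna : ¬ G.Adj a b) :
    ∃ S : Finset V, Sep G a b S := by
  classical
  refine ⟨Finset.univ \ {a, b}, by simp, by simp [hab.symm], fun L p hfw => ?_⟩
  obtain ⟨h0, hL, he⟩ := hfw
  have hL1 : 1 ≤ L := by
    by_contra h
    exact hab (by rw [← h0, ← hL, (by omega : L = 0)])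
  refine ⟨1, hL1, ?_⟩
  have hadj : G.Adj a (p 1) := h0 ▸ he 0 (by omega)
  have h1 : p 1 ≠ a := fun h => (h ▸ hadj).ne rfl
  have h2 : p 1 ≠ b := fun h => hna (h ▸ hadj)
  simp [h1, h2]

/-- a minimum-cardinality separator. -/
lemma exists_min_sep {a b : V} (hab : a ≠ b) (hna : ¬ G.Adj a b) :
    ∃ S : Finset V, Sep G a b S ∧ ∀ T : Finset V, Sep G a b T → S.card ≤ T.card := by
  classical
  have hex : ∃ n, ∃ S : Finset V, S.card = n ∧ Sep G a b S := by
    obtain ⟨S, hS⟩ := exists_sep hab hna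
    exact ⟨S.card, S, rfl, hS⟩
  obtain ⟨S, hcard, hS⟩ := Nat.find_spec hex
  refine ⟨S, hS, fun T hT => ?_⟩
  rw [hcard]
  by_contra h
  exact Nat.find_min hex (by omega : T.card < Nat.find hex) ⟨T, rfl, hT⟩

/-- every vertex of a minimum separator has a neighbour in the component of `a`. -/
lemma min_sep_neighbor {a b : V} {S : Finset V} (hsep : Sep G a b S)
    (hmin : ∀ T : Finset V, Sep G a b T → S.card ≤ T.card) {x : V} (hx : x ∈ S) :
    ∃ u, Avoid G S a u ∧ G.Adj x u := by
  classical
  by_contra hcon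
  push_neg at hcon
  have hsep' : Sep G a b (S.erase x) := by
    obtain ⟨ha, hb, hs⟩ := hsep
    refine ⟨fun h => ha (Finset.mem_of_mem_erase h), fun h => hb (Finset.mem_of_mem_erase h),
      fun L p hfw => ?_⟩
    obtain ⟨i, hi, hiS⟩ := hs L p hfw
    have hiex : ∃ j, j ≤ L ∧ p j ∈ S := ⟨i, hi, hiS⟩
    set i0 := Nat.find hiex with hi0def
    obtain ⟨hi0L, hi0S⟩ := Nat.find_spec hiex
    have hi0min : ∀ j, j < i0 → ¬ (j ≤ L ∧ p j ∈ S) := fun j hj => Nat.find_min hiex hj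
    have hi01 : 1 ≤ i0 := by
      rcases Nat.eq_zero_or_pos i0 with h | h
      · exfalso
        have h0' : Nat.find hiex = 0 := h
        rw [h0'] at hi0S
        exact ha (hfw.1 ▸ hi0S)
      · exact h
    have hprev : Avoid G S a (p (i0 - 1)) := by
      refine Avoid.mem_of_walk (L := i0 - 1) (p := p)
        ⟨hfw.1, rfl, fun j hj => hfw.2.2 j (by omega)⟩ (fun j hj => ?_) le_rfl
      intro hjS
      exact hi0min j (by omega) ⟨by omega, hjS⟩
    have hadj : G.Adj (p (i0 - 1)) (p i0) := by
      have := hfw.2.2 (i0 - 1) (by omega)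
      rwa [(by omega : i0 - 1 + 1 = i0)] at this
    have hne : p i0 ≠ x := by
      intro h
      exact hcon (p (i0 - 1)) hprev (h ▸ hadj.symm)
    exact ⟨i0, hi0L, Finset.mem_erase.2 ⟨hne, hi0S⟩⟩
  have h1 := hmin _ hsep'
  have h2 : (S.erase x).card < S.card := Finset.card_erase_lt_of_mem hx
  omega

end Separator

section Embed

lemma fin_sub_val_one {n : ℕ} [NeZero n] (hn : 2 ≤ n) {i j : Fin n} :
    (j - i).val = 1 ↔ j = i + 1 := by
  have h1 : (1 : Fin n).val = 1 := by
    rw [Fin.val_one']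
    exact Nat.mod_eq_of_lt (by omega)
  constructor
  · intro h
    have : j - i = 1 := Fin.ext (by rw [h, h1])
    rw [sub_eq_iff_eq_add] at this
    rw [this, add_comm]
  · intro h
    have : j - i = 1 := by rw [h]; simp
    rw [this, h1]

def cycle_embed {n : ℕ} [NeZero n] (hn : 4 ≤ n) (c : Fin n → V) (hinj : Function.Injective c)
    (h1 : ∀ i : Fin n, G.Adj (c i) (c (i + 1)))
    (h2 : ∀ i j : Fin n, G.Adj (c i) (c j) → j = i + 1 ∨ i = j + 1) :
    (cycleGraph n) ↪g G := by
  refine ⟨⟨c, hinj⟩, fun {i j} => ?_⟩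
  show G.Adj (c i) (c j) ↔ _
  rw [cycleGraph_adj']
  constructor
  · intro h
    rcases h2 i j h with h' | h'
    · right; rw [fin_sub_val_one (by omega)]; exact h'
    · left; rw [fin_sub_val_one (by omega)]; exact h'
  · intro h
    rcases h with h' | h'
    · rw [fin_sub_val_one (by omega)] at h'
      rw [h']
      exact (h1 j).symm
    · rw [fin_sub_val_one (by omega)] at h'
      rw [h']
      exact h1 i

lemma chordal_cycle {n : ℕ} [NeZero n] (hch : Chordal G) (hn : 4 ≤ n) (c : Fin n → V)
    (hinj : Function.Injective c)
    (h1 : ∀ i : Fin n, G.Adj (c i) (c (i + 1)))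
    (h2 : ∀ i j : Fin n, G.Adj (c i) (c j) → j = i + 1 ∨ i = j + 1) : False :=
  (hch n hn).false (cycle_embed hn c hinj h1 h2)

lemma Chordal.induce (hch : Chordal G) (s : Set V) : Chordal (G.induce s) :=
  fun n hn => ⟨fun e => (hch n hn).false ((SimpleGraph.Embedding.induce s).comp e)⟩

end Embed

section Clique
variable [Fintype V]

lemma min_sep_clique (hch : Chordal G) {a b : V} (hab : a ≠ b) (hna : ¬ G.Adj a b)
    {S : Finset V} (hsep : Sep G a b S) (hmin : ∀ T : Finset V, Sep G a b T → S.card ≤ T.card)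
    {x y : V} (hx : x ∈ S) (hy : y ∈ S) (hxy : x ≠ y) : G.Adj x y := by
  by_contra hnxy
  have hminB : ∀ T : Finset V, Sep G b a T → S.card ≤ T.card := fun T hT => hmin T hT.symm
  obtain ⟨xA, hxAav, hxAadj⟩ := min_sep_neighbor hsep hmin hx
  obtain ⟨yA, hyAav, hyAadj⟩ := min_sep_neighbor hsep hmin hy
  obtain ⟨xB, hxBav, hxBadj⟩ := min_sep_neighbor hsep.symm hminB hx
  obtain ⟨yB, hyBav, hyBadj⟩ := min_sep_neighbor hsep.symm hminB hy
  have hdisj : ∀ v, Avoid G S a v → Avoid G S b v → False := fun v h h' =>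
    not_sep_of_avoid (h.trans h'.symm) hsep
  have hcross : ∀ u v, Avoid G S a u → Avoid G S b v → ¬ G.Adj u v := fun u v hu hv hadj =>
    hdisj v (hu.step hadj hv.notin) hv
  -- a walk from x to y through one side
  have hside : ∀ (z zx zy : V), Avoid G S z zx → Avoid G S z zy →
      G.Adj x zx → G.Adj y zy →
      ∃ L p, FW G p L x y ∧ ∀ i, 0 < i → i < L → p i ∈ {v | Avoid G S z v} := by
    intro z zx zy hzx hzy hx1 hy1
    obtain ⟨M, w, hwfw, hwS⟩ := hzx.symm.trans hzy
    have hwA : ∀ i, i ≤ M → Avoid G S z (w i) := fun i hi =>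
      hzx.trans (Avoid.mem_of_walk hwfw hwS hi)
    refine ⟨M + 2, fun i => if i = 0 then x else if i ≤ M + 1 then w (i - 1) else y,
      ⟨by simp, ?_, fun i hi => ?_⟩, fun i h1 h2 => ?_⟩
    · show (if M + 2 = 0 then x else if M + 2 ≤ M + 1 then w (M + 2 - 1) else y) = y
      rw [if_neg (by omega), if_neg (by omega)]
    · show G.Adj (if i = 0 then x else if i ≤ M + 1 then w (i-1) else y)
        (if i + 1 = 0 then x else if i + 1 ≤ M + 1 then w (i + 1 - 1) else y)
      rcases Nat.eq_zero_or_pos i with h | h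
      · subst h
        rw [if_pos rfl, if_neg (by omega), if_pos (by omega)]
        simpa [hwfw.1] using hx1
      · by_cases hc : i ≤ M
        · rw [if_neg (by omega), if_pos (by omega), if_neg (by omega), if_pos (by omega),
            (by omega : i + 1 - 1 = (i - 1) + 1)]
          exact hwfw.2.2 (i - 1) (by omega)
        · have hiM : i = M + 1 := by omega
          rw [if_neg (by omega), if_pos (by omega), if_neg (by omega), if_neg (by omega),
            hiM, (by omega : M + 1 - 1 = M), hwfw.2.1]
          exact hy1.symm
    · show (if i = 0 then x else if i ≤ M + 1 then w (i-1) else y) ∈ {v | Avoid G S z v}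
      rw [if_neg (by omega), if_pos (by omega)]
      exact hwA (i - 1) (by omega)
  obtain ⟨LA, pA, hfwA, hintA, hLA2, hinjA, hchA⟩ :=
    exists_min_walk hxy hnxy (hside a xA yA hxAav hyAav hxAadj hyAadj)
  obtain ⟨LB, pB, hfwB, hintB, hLB2, hinjB, hchB⟩ :=
    exists_min_walk hxy hnxy (hside b xB yB hxBav hyBav hxBadj hyBadj)
  set N := LA + LB with hN
  have hN4 : 4 ≤ N := by omega
  haveI : NeZero N := ⟨by omega⟩
  set cv : ℕ → V := fun k => if k ≤ LA then pA k else pB (N - k) with hcvdef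
  have hlow : ∀ k, k ≤ LA → cv k = pA k := fun k hk => if_pos hk
  have hhi : ∀ k, LA ≤ k → k ≤ N → cv k = pB (N - k) := by
    intro k h1 h2
    by_cases hc : k ≤ LA
    · have hk : k = LA := by omega
      rw [hlow k hc, hk, hfwA.2.1, (by omega : N - LA = LB), hfwB.2.1]
    · exact if_neg hc
  have hx0 : cv 0 = x := by rw [hlow 0 (by omega), hfwA.1]
  have hyLA : cv LA = y := by rw [hlow LA le_rfl, hfwA.2.1]
  have hcvN : cv N = x := by rw [hhi N (by omega) le_rfl, Nat.sub_self, hfwB.1]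
  have hAmem : ∀ k, 0 < k → k < LA → Avoid G S a (cv k) := by
    intro k h1 h2
    rw [hlow k (by omega)]
    exact hintA k h1 h2
  have hBmem : ∀ k, LA < k → k < N → Avoid G S b (cv k) := by
    intro k h1 h2
    rw [hhi k (by omega) (by omega)]
    exact hintB (N - k) (by omega) (by omega)
  -- injectivity on ℕ indices
  have hcvinj : ∀ k l, k < l → l ≤ N → cv k = cv l → k = 0 ∧ l = N := by
    intro k l hkl hlN heq
    by_cases hlA : l ≤ LA
    · rw [hlow k (by omega), hlow l hlA] at heq
      exact absurd heq (hinjA k l hkl hlA)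
    · by_cases hkA : LA ≤ k
      · rw [hhi k hkA (by omega), hhi l (by omega) hlN] at heq
        exact absurd heq.symm (hinjB (N - l) (N - k) (by omega) (by omega))
      · push_neg at hkA hlA
        rcases Nat.eq_zero_or_pos k with hk0 | hk0
        · subst hk0
          rcases eq_or_lt_of_le hlN with hlN' | hlN'
          · exact ⟨rfl, hlN'⟩
          · exfalso
            rw [hx0] at heq
            exact (heq ▸ hBmem l hlA hlN').notin hx
        · exfalso
          rcases eq_or_lt_of_le hlN with hlN' | hlN'
          · subst hlN'
            rw [hcvN] at heq
            exact (heq ▸ hAmem k hk0 hkA).notin hx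
          · exact hdisj _ (hAmem k hk0 hkA) (heq ▸ hBmem l hlA hlN')
  -- consecutive edges on ℕ indices
  have hcvedge : ∀ k, k < N → G.Adj (cv k) (cv (k + 1)) := by
    intro k hk
    by_cases hc : k + 1 ≤ LA
    · rw [hlow k (by omega), hlow (k+1) hc]
      exact hfwA.2.2 k (by omega)
    · rw [hhi k (by omega) (by omega), hhi (k+1) (by omega) (by omega)]
      have := hfwB.2.2 (N - (k+1)) (by omega)
      rw [(by omega : N - (k+1) + 1 = N - k)] at this
      exact this.symm
  -- chords on ℕ indices
  have hcvchord : ∀ k l, k < l → l < N → G.Adj (cv k) (cv l) →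
      l = k + 1 ∨ (k = 0 ∧ l = N - 1) := by
    intro k l hkl hlN hadj
    by_cases hlA : l ≤ LA
    · rw [hlow k (by omega), hlow l hlA] at hadj
      exact Or.inl (hchA k l hkl hlA hadj)
    · by_cases hkA : LA ≤ k
      · rw [hhi k hkA (by omega), hhi l (by omega) (by omega)] at hadj
        have := hchB (N - l) (N - k) (by omega) (by omega) hadj.symm
        omega
      · push_neg at hkA hlA
        rcases Nat.eq_zero_or_pos k with hk0 | hk0
        · subst hk0
          rw [hx0, hhi l (by omega) (by omega)] at hadj
          have h0 : pA 0 = x := hfwA.1  -- unused but fine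
          have := hchB 0 (N - l) (by omega) (by omega) (by rwa [hfwB.1])
          right
          exact ⟨rfl, by omega⟩
        · exfalso
          exact hcross _ _ (hAmem k hk0 hkA) (hBmem l hlA hlN) hadj
  -- assemble the Fin-indexed cycle
  refine chordal_cycle (n := N) hch hN4 (fun i => cv i.val) ?_ ?_ ?_
  · intro i j heq
    rcases lt_trichotomy i.val j.val with hc | hc | hc
    · exact absurd ((hcvinj i.val j.val hc (by omega) heq).2) (by omega)
    · exact Fin.ext hc
    · exact absurd ((hcvinj j.val i.val hc (by omega) heq.symm).2) (by omega)
  · intro i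
    show G.Adj (cv i.val) (cv (i + 1).val)
    have hval : (i + 1).val = (i.val + 1) % N := by
      rw [Fin.val_add, Fin.val_one', Nat.mod_eq_of_lt (show (1:ℕ) < N by omega)]
    by_cases hc : i.val + 1 < N
    · rw [hval, Nat.mod_eq_of_lt hc]
      exact hcvedge i.val (by omega)
    · have h1 : i.val + 1 = N := by omega
      have h2 : (i + 1).val = 0 := by rw [hval, h1, Nat.mod_self]
      rw [h2, hx0, ← hcvN]
      have h3 := hcvedge i.val (by omega)
      rwa [h1] at h3
  · intro i j hadj
    have hvadd : ∀ m : Fin N, (m + 1).val = (m.val + 1) % N := by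
      intro m
      rw [Fin.val_add, Fin.val_one', Nat.mod_eq_of_lt (show (1:ℕ) < N by omega)]
    rcases lt_trichotomy i.val j.val with hc | hc | hc
    · rcases hcvchord i.val j.val hc j.isLt hadj with h | h
      · left
        exact Fin.ext (by rw [hvadd, Nat.mod_eq_of_lt (by omega)]; omega)
      · right
        refine Fin.ext ?_
        rw [hvadd, (by omega : j.val + 1 = N), Nat.mod_self]
        omega
    · exact absurd (Fin.ext hc : i = j) (by rintro rfl; exact hadj.ne rfl)
    · rcases hcvchord j.val i.val hc i.isLt hadj.symm with h | h
      · right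
        exact Fin.ext (by rw [hvadd, Nat.mod_eq_of_lt (by omega)]; omega)
      · left
        refine Fin.ext ?_
        rw [hvadd, (by omega : i.val + 1 = N), Nat.mod_self]
        omega

end Clique

universe u

theorem dirac : ∀ (n : ℕ) {V : Type u} [Fintype V] (G : SimpleGraph V), Fintype.card V ≤ n →
    Chordal G → ∀ a b : V, a ≠ b → ¬ G.Adj a b →
    ∃ u v : V, u ≠ v ∧ ¬ G.Adj u v ∧ Simp G u ∧ Simp G v := by
  intro n
  induction n with
  | zero =>
    intro V _ G hcard _ a _ _ _
    exact absurd (Fintype.card_pos_iff.mpr ⟨a⟩) (by omega)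
  | succ n IH =>
    intro V _ G hcard hch a b hab hnab
    obtain ⟨S, hsep, hmin⟩ := exists_min_sep hab hnab
    have hdisj : ∀ v, Avoid G S a v → Avoid G S b v → False := fun v h h' =>
      not_sep_of_avoid (h.trans h'.symm) hsep
    have hSclique : ∀ {x y : V}, x ∈ S → y ∈ S → x ≠ y → G.Adj x y :=
      fun {x y} hx hy hxy => min_sep_clique hch hab hnab hsep hmin hx hy hxy
    have hside : ∀ (z w : V), z ≠ w → ¬ G.Adj z w → Sep G z w S →
        (∀ T : Finset V, Sep G z w T → S.card ≤ T.card) →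
        ∃ u, Avoid G S z u ∧ Simp G u := by
      intro z w hzw hnzw hsepz hminz
      classical
      set A : Set V := {v | Avoid G S z v} ∪ ↑S with hA
      have hwA : w ∉ A := by
        intro h
        rcases h with h | h
        · exact not_sep_of_avoid h hsepz
        · exact hsepz.2.1 h
      have hcardA : Fintype.card A ≤ n := by
        have hlt : Fintype.card ↑A < Fintype.card V :=
          Fintype.card_lt_of_injective_of_notMem (Subtype.val : ↥A → V)
            Subtype.val_injective (b := w) (by rintro ⟨⟨r, hr⟩, rfl⟩; exact hwA hr)
        omega
      have hclose : ∀ u, u ∈ ({v | Avoid G S z v} : Set V) → ∀ t, G.Adj u t → t ∈ A := by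
        intro u hu t hadj
        by_cases ht : t ∈ S
        · exact Or.inr ht
        · exact Or.inl (Avoid.step (show Avoid G S z u from hu) hadj ht)
      by_cases hcomp : ∀ p q : A, p ≠ q → (G.induce A).Adj p q
      · refine ⟨z, Avoid.refl hsepz.1, ?_⟩
        intro s t hs ht hst
        have hzA : z ∈ ({v | Avoid G S z v} : Set V) := Avoid.refl hsepz.1
        exact hcomp ⟨s, hclose z hzA s hs⟩ ⟨t, hclose z hzA t ht⟩
          (fun hh => hst (congrArg Subtype.val hh))
      · push_neg at hcomp
        obtain ⟨p, q, hpq, hnpq⟩ := hcomp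
        obtain ⟨u, v, huv, hnuv, hsu, hsv⟩ := IH (G.induce A) hcardA (hch.induce A) p q hpq hnpq
        have hkey : ∀ (r : A), r.val ∈ ({v | Avoid G S z v} : Set V) → Simp (G.induce A) r →
            ∃ u0, Avoid G S z u0 ∧ Simp G u0 := by
          intro r hr hsr
          refine ⟨r.val, hr, ?_⟩
          intro s t hs ht hst
          exact hsr ⟨s, hclose _ hr s hs⟩ ⟨t, hclose _ hr t ht⟩ hs ht
            (fun hh => hst (congrArg Subtype.val hh))
        by_cases hu : u.val ∈ S
        · by_cases hv : v.val ∈ S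
          · exact absurd (hSclique hu hv (fun hh => huv (Subtype.ext hh))) hnuv
          · rcases v.2 with h | h
            · exact hkey v h hsv
            · exact absurd h hv
        · rcases u.2 with h | h
          · exact hkey u h hsu
          · exact absurd h hu
    have hminB : ∀ T, Sep G b a T → S.card ≤ T.card := fun T hT => hmin T hT.symm
    obtain ⟨u, huA, hsu⟩ := hside a b hab hnab hsep hmin
    obtain ⟨v, hvB, hsv⟩ := hside b a hab.symm (fun h => hnab h.symm) hsep.symm hminB
    refine ⟨u, v, ?_, ?_, hsu, hsv⟩
    · rintro rfl
      exact hdisj u huA hvB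
    · intro h
      exact hdisj v (huA.step h hvB.notin) hvB

lemma exists_simp {V : Type u} [Fintype V] {G : SimpleGraph V} (hch : Chordal G)
    (hne : Nonempty V) : ∃ v, Simp G v := by
  by_cases hcomp : ∀ p q : V, p ≠ q → G.Adj p q
  · obtain ⟨v⟩ := hne
    exact ⟨v, fun s t _ _ hst => hcomp s t hst⟩
  · push_neg at hcomp
    obtain ⟨a, b, hab, hnab⟩ := hcomp
    obtain ⟨u, _, _, _, hsu, _⟩ := dirac (Fintype.card V) G le_rfl hch a b hab hnab
    exact ⟨u, hsu⟩

theorem colorable_of_chordal : ∀ (n : ℕ) {V : Type u} [Fintype V] (G : SimpleGraph V) (d : ℕ),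
    Fintype.card V ≤ n → Chordal G → G.CliqueFree (d + 1) → G.Colorable d := by
  intro n
  induction n with
  | zero =>
    intro V _ G d hcard _ _
    haveI : IsEmpty V := Fintype.card_eq_zero_iff.mp (by omega)
    exact ⟨SimpleGraph.Coloring.mk (fun v => isEmptyElim v) (fun {u w} h => isEmptyElim u)⟩
  | succ n IH =>
    intro V _ G d hcard hch hcf
    classical
    cases isEmpty_or_nonempty V with
    | inl h => exact ⟨SimpleGraph.Coloring.mk (fun v => isEmptyElim v) (fun {u w} h => isEmptyElim u)⟩
    | inr hne =>
      obtain ⟨v, hv⟩ := exists_simp hch hne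
      have hd : 1 ≤ d := by
        by_contra h
        have hd0 : d = 0 := by omega
        subst hd0
        exact hcf {v} ⟨by simp, by simp⟩
      set A : Set V := {w | w ≠ v} with hA
      have hvA : v ∉ A := by simp [hA]
      have hcardA : Fintype.card ↑A ≤ n := by
        have hlt : Fintype.card ↑A < Fintype.card V :=
          Fintype.card_lt_of_injective_of_notMem (Subtype.val : ↥A → V)
            Subtype.val_injective (b := v) (by rintro ⟨r, hr2⟩; exact hvA (hr2 ▸ r.2))
        omega
      obtain ⟨C⟩ := IH (G.induce A) d hcardA (hch.induce A)
        (hcf.comap (SimpleGraph.Embedding.induce A).isContained)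
      set NB : Finset V := Finset.univ.filter (fun w => G.Adj v w) with hNB
      have hNBadj : ∀ w ∈ NB, G.Adj v w := fun w hw => (Finset.mem_filter.mp hw).2
      have hNBcard : NB.card < d := by
        by_contra h
        push_neg at h
        obtain ⟨t, htsub, htcard⟩ := Finset.exists_subset_card_eq h
        have hvt : v ∉ t := fun hvt => (hNBadj v (htsub hvt)).ne rfl
        refine hcf (insert v t) ⟨?_, ?_⟩
        · intro s hs r hr hsr
          simp only [Finset.coe_insert, Set.mem_insert_iff, Finset.mem_coe] at hs hr
          rcases hs with rfl | hs
          · rcases hr with rfl | hr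
            · exact absurd rfl hsr
            · exact hNBadj r (htsub hr)
          · rcases hr with rfl | hr
            · exact (hNBadj s (htsub hs)).symm
            · exact hv s r (hNBadj s (htsub hs)) (hNBadj r (htsub hr)) hsr
        · rw [Finset.card_insert_of_notMem hvt, htcard]
      have hmemA : ∀ w ∈ NB, w ∈ A := fun w hw => ((hNBadj w hw).ne).symm
      set F : Finset (Fin d) :=
        NB.attach.image (fun w => C ⟨w.val, hmemA w.val w.2⟩) with hF
      have hFcard : F.card < d := by
        have h1 : F.card ≤ NB.attach.card := Finset.card_image_le
        rw [Finset.card_attach] at h1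
        omega
      have hex : ∃ c : Fin d, c ∉ F := by
        by_contra h
        push_neg at h
        have h1 : (Finset.univ : Finset (Fin d)) ⊆ F := fun c _ => h c
        have h2 := Finset.card_le_card h1
        rw [Finset.card_univ, Fintype.card_fin] at h2
        omega
      obtain ⟨c, hc⟩ := hex
      refine ⟨SimpleGraph.Coloring.mk (fun w => if h : w = v then c else C ⟨w, h⟩) ?_⟩
      intro s t hst
      show (if h : s = v then c else C ⟨s, h⟩) ≠ (if h : t = v then c else C ⟨t, h⟩)
      by_cases hs : s = v
      · have hvt : G.Adj v t := hs ▸ hst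
        have ht : t ≠ v := (G.ne_of_adj hvt).symm
        rw [dif_pos hs, dif_neg ht]
        intro hEq
        apply hc
        rw [hEq]
        have htNB : t ∈ NB := Finset.mem_filter.mpr ⟨Finset.mem_univ t, hvt⟩
        exact Finset.mem_image.mpr ⟨⟨t, htNB⟩, Finset.mem_attach _ _, rfl⟩
      · by_cases ht : t = v
        · have hvs : G.Adj v s := ht ▸ hst.symm
          rw [dif_pos ht, dif_neg hs]
          intro hEq
          apply hc
          rw [← hEq]
          have hsNB : s ∈ NB := Finset.mem_filter.mpr ⟨Finset.mem_univ s, hvs⟩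
          exact Finset.mem_image.mpr ⟨⟨s, hsNB⟩, Finset.mem_attach _ _, rfl⟩
        · rw [dif_neg hs, dif_neg ht]
          exact C.valid hst

end ChordalAux

/-- A chordal graph (no induced cycle of length ≥ 4) whose maximum clique has size at
most `d` is `d`-colorable, i.e. its chromatic number is at most `d`. -/
theorem stmt_10 {V : Type*} [Fintype V] (G : SimpleGraph V) (d : ℕ)
    (hchordal : ∀ n, 4 ≤ n → IsEmpty ((SimpleGraph.cycleGraph n) ↪g G))
    (hclique : G.CliqueFree (d + 1)) :
    G.Colorable d := by
  exact ChordalAux.colorable_of_chordal (Fintype.card V) G d le_rfl hchordal hclique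
end

section
/- Let H be a hypergraph and F an elimination forest of H. Then the pair (F, bag_F) is a tree decomposition of H, where bag_F(u) consists of u together with all ancestors v of u in F such that v is adjacent (shares a hyperedge) with u or with some descendant of u. That is: (1) every hyperedge e of H is contained in bag_F(u) for some u, and (2) for every vertex v, the set of nodes u with v ∈ bag_F(u) is connected in F. -/
/-- The bag of `u` induced by an elimination forest: `u` together with all its
ancestors that are adjacent to `u` or to a descendant of `u`. -/
def bagF {V : Type*} (H : SetHypergraph V) (F : RootedForest V) (u : V) : Set V :=
  insert u {v | F.anc v u ∧ ∃ w, F.anc u w ∧ H.adj v w}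

/-- Connectivity of a set of nodes inside the forest `F` (viewed as a graph whose
edges join each vertex with its parent). -/
def FConnectedOn {V : Type*} (F : RootedForest V) (S : Set V) : Prop :=
  ∀ a ∈ S, ∀ b ∈ S,
    Relation.ReflTransGen
      (fun x y => x ∈ S ∧ y ∈ S ∧ (F.parent x = some y ∨ F.parent y = some x)) a b

/-- An elimination forest induces a tree decomposition: (1) every hyperedge is
contained in some bag, and (2) for every vertex `v`, the set of nodes whose bags
contain `v` is connected in the forest. -/
theorem stmt_17 {V : Type*} [Fintype V] (H : SetHypergraph V) (F : RootedForest V)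
    (hEF : IsEliminationForest H F) :
    (∀ e ∈ H.E, ∃ u : V, e ⊆ bagF H F u) ∧
    (∀ v : V, FConnectedOn F {u | v ∈ bagF H F u}) := by
  classical
  constructor
  · intro e he
    -- find the deepest vertex of e
    have key : ∀ s : Finset V, s.Nonempty → ↑s ⊆ e → ∃ u ∈ s, ∀ v ∈ s, F.anc v u := by
      intro s
      induction s using Finset.induction_on with
      | empty => intro h; exact absurd h (by simp)
      | @insert a t ha ih =>
        intro _ hsub
        have hae : a ∈ e := hsub (by simp)
        have hte : ↑t ⊆ e := fun x hx => hsub (by simp [hx])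
        rcases t.eq_empty_or_nonempty with rfl | hne
        · refine ⟨a, by simp, fun v hv => ?_⟩
          simp only [Finset.insert_empty, Finset.mem_singleton] at hv
          subst hv; exact Relation.ReflTransGen.refl
        · obtain ⟨u, hu, hmin⟩ := ih hne hte
          have hue : u ∈ e := hte hu
          by_cases hau : a = u
          · exact ⟨u, by simp [hu], fun v hv => by
              rcases Finset.mem_insert.mp hv with rfl | hv
              · exact hau ▸ Relation.ReflTransGen.refl
              · exact hmin v hv⟩
          · have hadj : H.adj a u := ⟨hau, e, he, hae, hue⟩
            rcases hEF a u hadj with h | h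
            · -- a ancestor of u : u stays deepest
              exact ⟨u, by simp [hu], fun v hv => by
                rcases Finset.mem_insert.mp hv with rfl | hv
                · exact h
                · exact hmin v hv⟩
            · -- u ancestor of a : a is deeper
              refine ⟨a, by simp, fun v hv => ?_⟩
              rcases Finset.mem_insert.mp hv with rfl | hv
              · exact Relation.ReflTransGen.refl
              · exact Relation.ReflTransGen.trans h (hmin v hv)
    have hne : e.Nonempty := H.edge_nonempty e he
    have hfin : e.Finite := Set.toFinite e
    obtain ⟨u, hu, hmin⟩ := key hfin.toFinset
      (hfin.toFinset_nonempty.mpr hne) (by rw [Set.Finite.coe_toFinset])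
    have hue : u ∈ e := hfin.mem_toFinset.mp hu
    refine ⟨u, fun v hv => ?_⟩
    simp only [bagF, Set.mem_insert_iff, Set.mem_setOf_eq]
    by_cases hvu : v = u
    · exact Or.inl hvu
    · exact Or.inr ⟨hmin v (hfin.mem_toFinset.mpr hv), u,
        Relation.ReflTransGen.refl, hvu, e, he, hv, hue⟩
  · intro v
    set S : Set V := {u | v ∈ bagF H F u} with hS
    set R : V → V → Prop :=
      fun x y => x ∈ S ∧ y ∈ S ∧ (F.parent x = some y ∨ F.parent y = some x) with hR
    have hvS : v ∈ S := Set.mem_insert v _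
    -- key: from any node of S we can walk up to v inside S
    have key : ∀ u, v ∈ bagF H F u → Relation.ReflTransGen R u v := by
      intro u hu
      simp only [bagF, Set.mem_insert_iff, Set.mem_setOf_eq] at hu
      rcases hu with rfl | ⟨hanc, w, huw, hvw⟩
      · exact Relation.ReflTransGen.refl
      · -- hanc : RTG parent-step u v
        have main : ∀ x, Relation.ReflTransGen (fun a b => F.parent a = some b) x v →
            F.anc x w → Relation.ReflTransGen R x v := by
          intro x hx
          induction hx using Relation.ReflTransGen.head_induction_on with
          | refl => intro _; exact Relation.ReflTransGen.refl
          | @head x c hxc hcv ih =>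
            intro hxw
            have hcw : F.anc c w := Relation.ReflTransGen.tail hxw hxc
            have hxS : x ∈ S := by
              by_cases h : x = v
              · exact h ▸ hvS
              · exact Set.mem_insert_of_mem _
                  ⟨Relation.ReflTransGen.head hxc hcv, w, hxw, hvw⟩
            have hcS : c ∈ S := by
              by_cases h : c = v
              · exact h ▸ hvS
              · exact Set.mem_insert_of_mem _ ⟨hcv, w, hcw, hvw⟩
            exact Relation.ReflTransGen.head ⟨hxS, hcS, Or.inl hxc⟩ (ih hcw)
        exact main u hanc huw
    intro a ha b hb
    have hsymm : Symmetric R := fun x y ⟨h1, h2, h3⟩ => ⟨h2, h1, h3.symm⟩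
    exact Relation.ReflTransGen.trans (key a ha)
      (by haveI : Std.Symm R := ⟨hsymm⟩; exact Std.Symm.symm _ _ (key b hb))
end
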